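/- arXiv:0905.4150 — 2 statements merged into one kernel-verified Lean document; each statement's English description precedes it below -/
import Mathlib

section
/- Let f = y₅⁴ − y₀y₁y₂(y₀+y₁+y₂+y₃+y₄) and g = 2y₅² − (y₀y₁+y₀y₂+y₁y₂−y₃y₄) in ℂ[y₀,…,y₅]. Suppose y = (y₀,…,y₅) ∈ ℂ⁶, y ≠ 0, satisfies either (i) y₀+y₄ = 0, y₁+y₄ = 0, y₃−y₄ = 0 and y₂y₄+y₅² = 0, or (ii) y₀ = y₂ = y₃ = y₅ = 0. Then f(y) = g(y) = 0 and the 2×6 Jacobian matrix whose rows are the gradients of f and g at y has rank strictly less than 2. In particular the corresponding points of the projective variety X = {f = g = 0} ⊂ ℙ⁵(ℂ) are singular points of X. -/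
open MvPolynomial

/-- The quartic `f = y₅⁴ − y₀y₁y₂(y₀+y₁+y₂+y₃+y₄)`. -/
noncomputable def fpoly : MvPolynomial (Fin 6) ℂ :=
  X 5 ^ 4 - X 0 * X 1 * X 2 * (X 0 + X 1 + X 2 + X 3 + X 4)

/-- The quadric `g = 2y₅² − (y₀y₁+y₀y₂+y₁y₂−y₃y₄)`. -/
noncomputable def gpoly : MvPolynomial (Fin 6) ℂ :=
  2 * X 5 ^ 2 - (X 0 * X 1 + X 0 * X 2 + X 1 * X 2 - X 3 * X 4)

/-- The 2×6 Jacobian matrix of `(f, g)` evaluated at `y`: its rows are the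
gradients of `f` and `g`. -/
noncomputable def jacobianFG (y : Fin 6 → ℂ) : Matrix (Fin 2) (Fin 6) ℂ :=
  Matrix.of fun i j => eval y (pderiv j (if i = 0 then fpoly else gpoly))

/-- A 2×6 matrix whose first row is a multiple of the second has rank < 2. -/
lemma rank_lt_two_of_row_mul (M : Matrix (Fin 2) (Fin 6) ℂ) (c : ℂ)
    (h : ∀ j, M 0 j = c * M 1 j) : M.rank < 2 := by
  have hM : M = (Matrix.of fun i (_ : Fin 1) => if i = 0 then c else 1) *
      (Matrix.of fun (_ : Fin 1) j => M 1 j) := by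
    ext i j
    fin_cases i <;> simp [Matrix.mul_apply, h]
  have h1 : M.rank ≤ 1 := by
    rw [hM]
    refine le_trans (Matrix.rank_mul_le_left _ _) ?_
    simpa using Matrix.rank_le_card_width
      (Matrix.of fun i (_ : Fin 1) => if i = 0 then c else (1 : ℂ))
  omega

/-- A nonzero point of `ℂ⁶` lying on either of the two listed loci satisfies
`f = g = 0` and the Jacobian matrix of `(f,g)` there has rank `< 2`; hence the
corresponding point of `X = {f = g = 0} ⊂ ℙ⁵(ℂ)` is singular. -/
theorem stmt_1 (y : Fin 6 → ℂ) (hy : y ≠ 0)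
    (h : (y 0 + y 4 = 0 ∧ y 1 + y 4 = 0 ∧ y 3 - y 4 = 0 ∧ y 2 * y 4 + y 5 ^ 2 = 0) ∨
         (y 0 = 0 ∧ y 2 = 0 ∧ y 3 = 0 ∧ y 5 = 0)) :
    eval y fpoly = 0 ∧ eval y gpoly = 0 ∧ (jacobianFG y).rank < 2 := by
  rcases h with ⟨h0, h1, h3, h4⟩ | ⟨h0, h2, h3, h5⟩
  · have e0 : y 0 = -y 4 := eq_neg_of_add_eq_zero_left h0
    have e1 : y 1 = -y 4 := eq_neg_of_add_eq_zero_left h1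
    have e3 : y 3 = y 4 := sub_eq_zero.mp h3
    refine ⟨?_, ?_, ?_⟩
    · simp only [fpoly, map_sub, map_mul, map_add, map_pow, eval_X]
      rw [e0, e1, e3]
      linear_combination (y 5 ^ 2 - y 2 * y 4) * h4
    · simp only [gpoly, map_sub, map_mul, map_add, map_pow, map_ofNat, eval_X]
      rw [e0, e1, e3]
      linear_combination 2 * h4
    · have h2' : ∀ k : Fin 6, (pderiv k) (2 : MvPolynomial (Fin 6) ℂ) = 0 := by
        intro k
        rw [show (2 : MvPolynomial (Fin 6) ℂ) = C 2 from (map_ofNat C 2).symm, pderiv_C]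
      refine rank_lt_two_of_row_mul _ (y 5 ^ 2) fun j => ?_
      show eval y (pderiv j fpoly) = y 5 ^ 2 * eval y (pderiv j gpoly)
      fin_cases j
      · simp [fpoly, gpoly, h2', e0, e1, e3]
        linear_combination (y 2 - y 4) * h4
      · simp [fpoly, gpoly, h2', e0, e1, e3]
        linear_combination (y 2 - y 4) * h4
      · simp [fpoly, gpoly, h2', e0, e1, e3]
        linear_combination (-2 * y 4) * h4
      · simp [fpoly, gpoly, h2', e0, e1, e3]
        linear_combination (-y 4) * h4
      · simp [fpoly, gpoly, h2', e0, e1, e3]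
        linear_combination (-y 4) * h4
      · simp [fpoly, gpoly, h2', e0, e1, e3]
        try ring
  · refine ⟨?_, ?_, ?_⟩
    · simp [fpoly, h0, h2, h5]
    · simp [gpoly, h0, h2, h3, h5]
    · refine rank_lt_two_of_row_mul _ 0 fun j => ?_
      show eval y (pderiv j fpoly) = 0 * eval y (pderiv j gpoly)
      fin_cases j <;> simp [fpoly, h0, h2, h3, h5]
end

section
/- On the open set {(g₁,g₂,g₃) ∈ ℂ³ : g₁g₂g₃ ≠ 0} define G₁ = g₁g₂/g₃ + g₃/(g₁g₂), G₂ = g₁g₃/g₂ + g₂/(g₁g₃), G₃ = g₂g₃/g₁ + g₁/(g₂g₃). Then the Jacobian determinant det(∂Gᵢ/∂gⱼ)_{1≤i,j≤3} equals 4·(g₃²−g₁²g₂²)(g₂²−g₁²g₃²)(g₁²−g₂²g₃²) / (g₁⁴g₂⁴g₃⁴) at every point with g₁g₂g₃ ≠ 0. -/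
/-- The partial derivative `∂f/∂gⱼ` of `f : ℂ³ → ℂ` at the point `p`. -/
noncomputable def pderivAt (f : (Fin 3 → ℂ) → ℂ) (j : Fin 3) (p : Fin 3 → ℂ) : ℂ :=
  deriv (fun t => f (Function.update p j t)) (p j)

/-- The three functions `G₁ = g₁g₂/g₃ + g₃/(g₁g₂)`, `G₂ = g₁g₃/g₂ + g₂/(g₁g₃)`,
`G₃ = g₂g₃/g₁ + g₁/(g₂g₃)` (with `p 0 = g₁`, `p 1 = g₂`, `p 2 = g₃`). -/
noncomputable def Gfun : Fin 3 → (Fin 3 → ℂ) → ℂ :=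
  ![fun p => p 0 * p 1 / p 2 + p 2 / (p 0 * p 1),
    fun p => p 0 * p 2 / p 1 + p 1 / (p 0 * p 2),
    fun p => p 1 * p 2 / p 0 + p 0 / (p 1 * p 2)]

lemma derA (a b x : ℂ) (ha : a ≠ 0) (hb : b ≠ 0) (hx : x ≠ 0) :
    deriv (fun t => t * a / b + b / (t * a)) x = a / b - b / (a * x ^ 2) := by
  have h1 : HasDerivAt (fun t : ℂ => t * a / b) (1 * a / b) x :=
    ((hasDerivAt_id x).mul_const a).div_const b
  have h2 : HasDerivAt (fun t : ℂ => b / (t * a)) ((0 * (x * a) - b * (1 * a)) / (x * a) ^ 2) x :=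
    (hasDerivAt_const x b).div ((hasDerivAt_id x).mul_const a) (mul_ne_zero hx ha)
  rw [(show HasDerivAt (fun t : ℂ => t * a / b + b / (t * a)) _ x from h1.add h2).deriv]
  field_simp
  ring

lemma derB (a b x : ℂ) (ha : a ≠ 0) (hb : b ≠ 0) (hx : x ≠ 0) :
    deriv (fun t => a * t / b + b / (a * t)) x = a / b - b / (a * x ^ 2) := by
  have h1 : HasDerivAt (fun t : ℂ => a * t / b) (a * 1 / b) x :=
    ((hasDerivAt_id x).const_mul a).div_const b
  have h2 : HasDerivAt (fun t : ℂ => b / (a * t)) ((0 * (a * x) - b * (a * 1)) / (a * x) ^ 2) x :=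
    (hasDerivAt_const x b).div ((hasDerivAt_id x).const_mul a) (mul_ne_zero ha hx)
  rw [(show HasDerivAt (fun t : ℂ => a * t / b + b / (a * t)) _ x from h1.add h2).deriv]
  field_simp
  ring

lemma derC (a x : ℂ) (ha : a ≠ 0) (hx : x ≠ 0) :
    deriv (fun t => a / t + t / a) x = -a / x ^ 2 + 1 / a := by
  have h1 : HasDerivAt (fun t : ℂ => a / t) ((0 * x - a * 1) / x ^ 2) x :=
    (hasDerivAt_const x a).div (hasDerivAt_id x) hx
  have h2 : HasDerivAt (fun t : ℂ => t / a) (1 / a) x := (hasDerivAt_id x).div_const a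
  rw [(show HasDerivAt (fun t : ℂ => a / t + t / a) _ x from h1.add h2).deriv]
  field_simp
  ring

set_option maxHeartbeats 2000000 in
/-- At every point with `g₁g₂g₃ ≠ 0`, the Jacobian determinant `det(∂Gᵢ/∂gⱼ)` equals
`4(g₃²−g₁²g₂²)(g₂²−g₁²g₃²)(g₁²−g₂²g₃²)/(g₁⁴g₂⁴g₃⁴)`. -/
theorem stmt_17 (p : Fin 3 → ℂ) (hp : p 0 * p 1 * p 2 ≠ 0) :
    (Matrix.of fun i j : Fin 3 => pderivAt (Gfun i) j p).det =
      4 * ((p 2 ^ 2 - p 0 ^ 2 * p 1 ^ 2) * (p 1 ^ 2 - p 0 ^ 2 * p 2 ^ 2) *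
            (p 0 ^ 2 - p 1 ^ 2 * p 2 ^ 2)) /
        (p 0 ^ 4 * p 1 ^ 4 * p 2 ^ 4) := by
  have h0 : p 0 ≠ 0 := fun h => hp (by simp [h])
  have h1 : p 1 ≠ 0 := fun h => hp (by simp [h])
  have h2 : p 2 ≠ 0 := fun h => hp (by simp [h])
  rw [Matrix.det_fin_three]
  simp only [Matrix.of_apply, pderivAt, Gfun, Matrix.cons_val_zero, Matrix.cons_val_one,
    Matrix.head_cons, Matrix.cons_val_two, Matrix.tail_cons,
    Function.update_self,
    Function.update_of_ne (by decide : (0:Fin 3) ≠ 1),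
    Function.update_of_ne (by decide : (0:Fin 3) ≠ 2),
    Function.update_of_ne (by decide : (1:Fin 3) ≠ 0),
    Function.update_of_ne (by decide : (1:Fin 3) ≠ 2),
    Function.update_of_ne (by decide : (2:Fin 3) ≠ 0),
    Function.update_of_ne (by decide : (2:Fin 3) ≠ 1)]
  rw [derA _ _ _ h1 h2 h0, derB _ _ _ h0 h2 h1, derC _ _ (mul_ne_zero h0 h1) h2,
    derA _ _ _ h2 h1 h0, derC _ _ (mul_ne_zero h0 h2) h1, derB _ _ _ h0 h1 h2,
    derC _ _ (mul_ne_zero h1 h2) h0, derA _ _ _ h2 h0 h1, derB _ _ _ h1 h0 h2]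
  rw [eq_div_iff (by simp [pow_eq_zero_iff, h0, h1, h2] : p 0 ^ 4 * p 1 ^ 4 * p 2 ^ 4 ≠ 0)]
  field_simp
  ring_nf
end
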